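/- Let $\mathcal S$ be a $(k_0,\dots,k_r)$-shuffle with walk data $j_i(l)$, $i(l)$ as above, and set $n_l = \sum_{i=0}^r n_{i,j_i(l-1)}$ for $1 \le l \le d+1$ in the lattice with basis $\{n_{i,j}\}$. Then the vectors $n_1, \dots, n_{d+1}, n_{1,k_1}, \dots, n_{r,k_r}$ form a $\mathbb{Z}$-basis of the lattice $\tilde N = \bigoplus_{i,j} \mathbb{Z}\, n_{i,j}$; in particular the real span decomposes as the internal direct sum $\tilde N_\mathbb{R} = (\bigoplus_{l=1}^{d+1} \mathbb{R}\, n_l) \oplus (\bigoplus_{i=1}^r \mathbb{R}\, n_{i,k_i})$. -/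

import Mathlib

open Finset

variable {r : ℕ}

/-- The walk data of a `(k 0, …, k r)`-shuffle, extended by a final step in
direction `0`. -/
def IsShuffleWalk (k : Fin (r + 1) → ℕ) (jw : ℕ → Fin (r + 1) → ℕ)
    (iw : ℕ → Fin (r + 1)) : Prop :=
  (∀ i, jw 0 i = 0) ∧
  (∀ l, 1 ≤ l → l ≤ (∑ i, k i) + 1 →
    jw l (iw l) = jw (l - 1) (iw l) + 1 ∧ ∀ i, i ≠ iw l → jw l i = jw (l - 1) i) ∧
  (∀ i, jw (∑ i, k i) i = k i) ∧
  iw ((∑ i, k i) + 1) = 0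

/-- `n_l := ∑ i, n_{i, j_i(l-1)}` in the lattice `Ñ = ⊕_{i,j} ℤ n_{i,j}`,
expressed in coordinates with respect to the basis `n_{i,j}`. -/
def nvec (k : Fin (r + 1) → ℕ) (jw : ℕ → Fin (r + 1) → ℕ) (l : ℕ) :
    (Σ i : Fin (r + 1), Fin (k i + 1)) → ℤ :=
  fun x => if (x.2 : ℕ) = jw (l - 1) x.1 then 1 else 0

/-- For a `(k 0, …, k r)`-shuffle walk, the vectors `n_1, …, n_{d+1}` together
with `n_{1,k 1}, …, n_{r,k r}` form a `ℤ`-basis of the lattice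
`Ñ = ⊕_{i,j} ℤ n_{i,j}` (and hence their real spans give an internal direct sum
decomposition of `Ñ_ℝ`). -/
theorem stmt9 (k : Fin (r + 1) → ℕ) (jw : ℕ → Fin (r + 1) → ℕ) (iw : ℕ → Fin (r + 1))
    (hwalk : IsShuffleWalk k jw iw) :
    ∃ b : Module.Basis (Fin ((∑ i, k i) + 1) ⊕ {i : Fin (r + 1) // i ≠ 0}) ℤ
        ((Σ i : Fin (r + 1), Fin (k i + 1)) → ℤ),
      (∀ l : Fin ((∑ i, k i) + 1), b (Sum.inl l) = nvec k jw ((l : ℕ) + 1)) ∧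
      (∀ i : {i : Fin (r + 1) // i ≠ 0},
        b (Sum.inr i) =
          Pi.single (⟨i.1, Fin.last (k i.1)⟩ : Σ i : Fin (r + 1), Fin (k i + 1)) 1) := by
  obtain ⟨h0, hstep, hend, -⟩ := hwalk
  set d := ∑ i, k i with hd
  -- monotonicity of the walk
  have hmono : ∀ a b : ℕ, a ≤ b → b ≤ d + 1 → ∀ i, jw a i ≤ jw b i := by
    intro a b hab hbd i
    induction b, hab using Nat.le_induction with
    | base => exact le_rfl
    | succ n hn ih =>
      have h1 := hstep (n + 1) (by omega) (by omega)
      have h2 : jw n i ≤ jw (n + 1) i := by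
        by_cases hi : i = iw (n + 1)
        · subst hi
          have := h1.1
          simp only [Nat.add_sub_cancel] at this
          omega
        · have := h1.2 i hi
          simp only [Nat.add_sub_cancel] at this
          omega
      exact le_trans (ih (by omega)) h2
  have hle : ∀ l, l ≤ d → ∀ i, jw l i ≤ k i := by
    intro l hl i
    have := hmono l d hl (by omega) i
    rw [hend i] at this
    exact this
  -- the walk attains all intermediate values
  have hattain : ∀ l, l ≤ d → ∀ (i : Fin (r + 1)) (j : ℕ), j ≤ jw l i →
      ∃ m, m ≤ l ∧ jw m i = j := by
    intro l
    induction l with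
    | zero =>
      intro _ i j hj
      rw [h0 i] at hj
      exact ⟨0, le_rfl, by rw [h0 i]; omega⟩
    | succ n ih =>
      intro hl i j hj
      have h1 := hstep (n + 1) (by omega) (by omega)
      by_cases hji : j ≤ jw n i
      · obtain ⟨m, hm, hm2⟩ := ih (by omega) i j hji
        exact ⟨m, by omega, hm2⟩
      · refine ⟨n + 1, le_rfl, ?_⟩
        by_cases hi : i = iw (n + 1)
        · subst hi
          have := h1.1
          simp only [Nat.add_sub_cancel] at this
          omega
        · have := h1.2 i hi
          simp only [Nat.add_sub_cancel] at this
          omega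
  -- the vector family
  set v : (Fin (d + 1) ⊕ {i : Fin (r + 1) // i ≠ 0}) → (Σ i : Fin (r + 1), Fin (k i + 1)) → ℤ :=
    Sum.elim (fun l => nvec k jw ((l : ℕ) + 1))
      (fun i => Pi.single (⟨i.1, Fin.last (k i.1)⟩ : Σ i : Fin (r + 1), Fin (k i + 1)) 1)
    with hv
  -- decomposition of nvec as a sum of standard basis vectors
  have hnv : ∀ l (hl : l ≤ d), nvec k jw (l + 1) =
      ∑ i, Pi.single (⟨i, ⟨jw l i, Nat.lt_succ_of_le (hle l hl i)⟩⟩ :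
        Σ i : Fin (r + 1), Fin (k i + 1)) 1 := by
    intro l hl
    funext x
    obtain ⟨x1, x2⟩ := x
    rw [Finset.sum_apply]
    rw [Finset.sum_eq_single x1]
    · simp only [nvec, Nat.add_sub_cancel, Pi.single_apply, Sigma.mk.inj_iff, heq_eq_eq]
      by_cases h : (x2 : ℕ) = jw l x1
      · simp [h, Fin.ext_iff]
      · simp only [h, if_false]
        rw [if_neg]
        rintro ⟨-, h2⟩
        exact h (by rw [h2])
    · intro i _ hi
      rw [Pi.single_apply, if_neg]
      intro h1
      exact hi (congrArg Sigma.fst h1).symm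
    · intro h
      exact absurd (Finset.mem_univ x1) h
  set S := Submodule.span ℤ (Set.range v) with hS
  have hmem : ∀ x, v x ∈ S := fun x => Submodule.subset_span ⟨x, rfl⟩
  -- all e_{i, k i} are in the span
  have hbase : ∀ i : Fin (r + 1),
      Pi.single (⟨i, Fin.last (k i)⟩ : Σ i : Fin (r + 1), Fin (k i + 1)) 1 ∈ S := by
    intro i
    by_cases hi : i = 0
    · subst hi
      have h1 : nvec k jw (d + 1) ∈ S := by
        have := hmem (Sum.inl ⟨d, by omega⟩)
        simpa [hv] using this
      rw [hnv d le_rfl] at h1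
      have h2 : ∀ i : Fin (r + 1),
          (⟨i, ⟨jw d i, Nat.lt_succ_of_le (hle d le_rfl i)⟩⟩ :
            Σ i : Fin (r + 1), Fin (k i + 1)) = ⟨i, Fin.last (k i)⟩ := by
        intro i
        congr 1
        · exact Fin.ext (by simpa using hend i)
      simp only [h2] at h1
      have h3 := Finset.sum_erase_add Finset.univ
        (fun i : Fin (r + 1) => (Pi.single
          (⟨i, Fin.last (k i)⟩ : Σ i : Fin (r + 1), Fin (k i + 1)) (1 : ℤ) :
            (Σ i : Fin (r + 1), Fin (k i + 1)) → ℤ)) (Finset.mem_univ 0)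
      have h4 : (Pi.single (⟨0, Fin.last (k 0)⟩ : Σ i : Fin (r + 1), Fin (k i + 1)) (1 : ℤ) :
            (Σ i : Fin (r + 1), Fin (k i + 1)) → ℤ) =
          (∑ i, (Pi.single (⟨i, Fin.last (k i)⟩ : Σ i : Fin (r + 1), Fin (k i + 1)) (1 : ℤ) :
            (Σ i : Fin (r + 1), Fin (k i + 1)) → ℤ)) -
          ∑ i ∈ Finset.univ.erase 0,
            (Pi.single (⟨i, Fin.last (k i)⟩ : Σ i : Fin (r + 1), Fin (k i + 1)) (1 : ℤ) :
              (Σ i : Fin (r + 1), Fin (k i + 1)) → ℤ) := by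
        rw [← h3]; ring
      rw [h4]
      refine Submodule.sub_mem _ h1 (Submodule.sum_mem _ ?_)
      intro i hi
      have hi0 : i ≠ 0 := Finset.ne_of_mem_erase hi
      have := hmem (Sum.inr ⟨i, hi0⟩)
      simpa [hv] using this
    · have := hmem (Sum.inr ⟨i, hi⟩)
      simpa [hv] using this
  -- downward induction along the walk
  have hkey : ∀ t, ∀ (i : Fin (r + 1)) (c : Fin (k i + 1)), (c : ℕ) = jw (d - t) i →
      Pi.single (⟨i, c⟩ : Σ i : Fin (r + 1), Fin (k i + 1)) (1 : ℤ) ∈ S := by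
    intro t
    induction t with
    | zero =>
      intro i c hc
      simp only [Nat.sub_zero] at hc
      have hcl : c = Fin.last (k i) := by
        apply Fin.ext
        rw [hc, hend i, Fin.val_last]
      rw [hcl]
      exact hbase i
    | succ t ih =>
      intro i c hc
      by_cases hdt : d ≤ t
      · have : d - (t + 1) = d - t := by omega
        rw [this] at hc
        exact ih i c hc
      · set m := d - (t + 1) with hm
        have hm1 : m + 1 = d - t := by omega
        have h1 := hstep (m + 1) (by omega) (by omega)
        simp only [Nat.add_sub_cancel] at h1
        by_cases hi : i = iw (m + 1)
        · have hmd : m ≤ d := by omega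
          have hpf : ∀ i' : Fin (r + 1), jw m i' < k i' + 1 :=
            fun i' => Nat.lt_succ_of_le (hle m hmd i')
          have hnvS : (∑ i', (Pi.single
              (⟨i', ⟨jw m i', hpf i'⟩⟩ : Σ i : Fin (r + 1), Fin (k i + 1)) (1 : ℤ) :
                (Σ i : Fin (r + 1), Fin (k i + 1)) → ℤ)) ∈ S := by
            have h := hmem (Sum.inl ⟨m, by omega⟩)
            rw [hv] at h
            simp only [Sum.elim_inl] at h
            rw [hnv m hmd] at h
            exact h
          have herase : (∑ i' ∈ Finset.univ.erase i, (Pi.single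
              (⟨i', ⟨jw m i', hpf i'⟩⟩ : Σ i : Fin (r + 1), Fin (k i + 1)) (1 : ℤ) :
                (Σ i : Fin (r + 1), Fin (k i + 1)) → ℤ)) ∈ S := by
            refine Submodule.sum_mem _ ?_
            intro i' hi'
            have hi'0 : i' ≠ iw (m + 1) := hi ▸ Finset.ne_of_mem_erase hi'
            refine ih i' ⟨jw m i', hpf i'⟩ ?_
            show jw m i' = jw (d - t) i'
            rw [← hm1, h1.2 i' hi'0]
          have hceq : (⟨i, c⟩ : Σ i : Fin (r + 1), Fin (k i + 1)) = ⟨i, ⟨jw m i, hpf i⟩⟩ := by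
            congr 1
            exact Fin.ext (by simpa using hc)
          have h3 := Finset.sum_erase_add Finset.univ
            (fun i' : Fin (r + 1) => (Pi.single
              (⟨i', ⟨jw m i', hpf i'⟩⟩ : Σ i : Fin (r + 1), Fin (k i + 1)) (1 : ℤ) :
                (Σ i : Fin (r + 1), Fin (k i + 1)) → ℤ)) (Finset.mem_univ i)
          beta_reduce at h3
          have h4 : (Pi.single (⟨i, c⟩ : Σ i : Fin (r + 1), Fin (k i + 1)) (1 : ℤ) :
                (Σ i : Fin (r + 1), Fin (k i + 1)) → ℤ) =
              (∑ i', (Pi.single (⟨i', ⟨jw m i', hpf i'⟩⟩ :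
                Σ i : Fin (r + 1), Fin (k i + 1)) (1 : ℤ) :
                  (Σ i : Fin (r + 1), Fin (k i + 1)) → ℤ)) -
              ∑ i' ∈ Finset.univ.erase i,
                (Pi.single (⟨i', ⟨jw m i', hpf i'⟩⟩ :
                  Σ i : Fin (r + 1), Fin (k i + 1)) (1 : ℤ) :
                    (Σ i : Fin (r + 1), Fin (k i + 1)) → ℤ) := by
            rw [hceq, ← h3]; ring
          rw [h4]
          exact Submodule.sub_mem _ hnvS herase
        · refine ih i c ?_
          rw [← hm1, h1.2 i hi, ← hc]
  -- the family spans everything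
  have hspan : S = ⊤ := by
    rw [Submodule.eq_top_iff']
    intro f
    have hf : f = ∑ x : (Σ i : Fin (r + 1), Fin (k i + 1)), f x • Pi.single x (1 : ℤ) := by
      conv_lhs => rw [pi_eq_sum_univ f]
      refine Finset.sum_congr rfl fun x _ => ?_
      congr 1
      funext y
      rw [Pi.single_apply]
      exact if_congr eq_comm rfl rfl
    rw [hf]
    refine Submodule.sum_mem _ fun x _ => Submodule.smul_mem _ _ ?_
    obtain ⟨i, c⟩ := x
    have hc : (c : ℕ) ≤ jw d i := by rw [hend i]; omega
    obtain ⟨m, hm, hm2⟩ := hattain d le_rfl i c hc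
    have hdm : d - (d - m) = m := by omega
    exact hkey (d - m) i c (by rw [hdm, hm2])
  -- cardinality
  have hcard : Fintype.card (Σ i : Fin (r + 1), Fin (k i + 1)) =
      Fintype.card (Fin (d + 1) ⊕ {i : Fin (r + 1) // i ≠ 0}) := by
    have hsub : Fintype.card {i : Fin (r + 1) // i ≠ 0} = r := by
      have h := Fintype.card_subtype_compl (fun i : Fin (r + 1) => i = 0)
      rw [Fintype.card_subtype_eq, Fintype.card_fin] at h
      set_option linter.unnecessarySimpa false in simpa using h
    simp only [Fintype.card_sigma, Fintype.card_fin, Fintype.card_sum, hsub]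
    rw [Finset.sum_add_distrib]
    simp only [Finset.sum_const, Finset.card_univ, Fintype.card_fin, smul_eq_mul, mul_one]
    omega
  -- construct the basis
  set b0 := Pi.basisFun ℤ (Fin (d + 1) ⊕ {i : Fin (r + 1) // i ≠ 0}) with hb0
  set f := b0.constr ℤ v with hf
  have hsurj : Function.Surjective f := by
    rw [← LinearMap.range_eq_top]
    rw [eq_top_iff, ← hspan, hS, Submodule.span_le]
    rintro _ ⟨x, rfl⟩
    exact ⟨b0 x, b0.constr_basis ℤ v x⟩
  have hinj : Function.Injective f := by
    set e := LinearEquiv.funCongrLeft ℤ ℤ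
      (Fintype.equivOfCardEq hcard :
        (Σ i : Fin (r + 1), Fin (k i + 1)) ≃ (Fin (d + 1) ⊕ {i : Fin (r + 1) // i ≠ 0}))
    have hg : Function.Injective (f ∘ₗ e.symm.toLinearMap) := by
      apply OrzechProperty.injective_of_surjective_endomorphism
      exact hsurj.comp e.symm.surjective
    have : f = (f ∘ₗ e.symm.toLinearMap) ∘ₗ e.toLinearMap := by
      ext x
      simp
    rw [this]
    exact hg.comp e.injective
  set E := LinearEquiv.ofBijective f ⟨hinj, hsurj⟩ with hE
  refine ⟨b0.map E, ?_, ?_⟩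
  · intro l
    rw [Module.Basis.map_apply]
    show f (b0 (Sum.inl l)) = _
    rw [b0.constr_basis ℤ v (Sum.inl l)]
    simp [hv]
  · intro i
    rw [Module.Basis.map_apply]
    show f (b0 (Sum.inr i)) = _
    rw [b0.constr_basis ℤ v (Sum.inr i)]
    simp [hv]
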